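/- arXiv:2012.01090 — 3 statements merged into one kernel-verified Lean document; each statement's English description precedes it below -/
import Mathlib

section
/- Let G be a connected graph with at least two vertices, let v ∈ V(G), and let 1 ≤ k ≤ l be integers. Then ε(G_{k−1,l+1}) > ε(G_{k,l}). -/
open SimpleGraph

/-- The eccentricity of a vertex: maximum distance to any vertex. -/
noncomputable def ecc {V : Type*} (G : SimpleGraph V) (v : V) : ℕ :=
  ⨆ u, G.dist v u

/-- The total eccentricity index: sum of eccentricities of all vertices. -/
noncomputable def totalEcc {V : Type*} [Fintype V] (G : SimpleGraph V) : ℕ :=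
  ∑ v, ecc G v

/-- A pendant vertex: a vertex of degree one, i.e. with exactly one neighbour. -/
def IsPendant {V : Type*} (G : SimpleGraph V) (v : V) : Prop :=
  ∃! u, G.Adj v u

/-- A cut vertex: a vertex whose removal disconnects the graph. -/
def IsCutVertex {V : Type*} (G : SimpleGraph V) (w : V) : Prop :=
  ¬ (G.induce {v | v ≠ w}).Connected

/-- distance between two subgraphs -/
noncomputable def subgraphDist {V : Type*} (G : SimpleGraph V) (B B' : G.Subgraph) : ℕ :=
  sInf {d | ∃ u ∈ B.verts, ∃ w ∈ B'.verts, G.dist u w = d}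

/-- A 2-connected subgraph: at least two vertices, connected, and no cut vertex. -/
def TwoConn {V : Type*} {G : SimpleGraph V} (H : G.Subgraph) : Prop :=
  2 ≤ H.verts.ncard ∧ H.coe.Connected ∧ ∀ w, ¬ IsCutVertex H.coe w

/-- A block: a maximal 2-connected subgraph. -/
def IsBlock {V : Type*} {G : SimpleGraph V} (H : G.Subgraph) : Prop :=
  TwoConn H ∧ ∀ H' : G.Subgraph, H ≤ H' → TwoConn H' → H' = H

/-- A pendant block: a block containing exactly one cut vertex of `G`. -/
def IsPendantBlock {V : Type*} (G : SimpleGraph V) (H : G.Subgraph) : Prop :=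
  ∃! w, w ∈ H.verts ∧ IsCutVertex G w

/-- `G_{k,l}`: the graph obtained from `G` by attaching two new paths,
with `k` resp. `l` new vertices, at the vertex `v`. -/
def attachTwoPaths {V : Type*} (G : SimpleGraph V) (v : V) (k l : ℕ) :
    SimpleGraph (V ⊕ (Fin k ⊕ Fin l)) :=
  SimpleGraph.fromRel (fun p q =>
    match p, q with
    | .inl x, .inl y => G.Adj x y
    | .inl x, .inr (.inl i) => x = v ∧ i.val = 0
    | .inl x, .inr (.inr i) => x = v ∧ i.val = 0
    | .inr (.inl i), .inr (.inl j) => i.val + 1 = j.val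
    | .inr (.inr i), .inr (.inr j) => i.val + 1 = j.val
    | _, _ => False)

/-- The graph obtained from `H1`, `H2` and the path `P_d = v_1 v_2 … v_d` by identifying
`u ∈ V(H1)`, `v ∈ V(H2)` and `v_1` into a single vertex.  The `Fin (d-1)` part records the
path vertices `v_2, …, v_d`. -/
def glueMid {V1 V2 : Type*} (H1 : SimpleGraph V1) (H2 : SimpleGraph V2)
    (u : V1) (v : V2) (d : ℕ) :
    SimpleGraph (V1 ⊕ ({x : V2 // x ≠ v} ⊕ Fin (d - 1))) :=
  SimpleGraph.fromRel (fun p q =>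
    match p, q with
    | .inl x, .inl y => H1.Adj x y
    | .inl x, .inr (.inl y) => x = u ∧ H2.Adj v y.1
    | .inl x, .inr (.inr i) => x = u ∧ i.val = 0
    | .inr (.inl x), .inr (.inl y) => H2.Adj x.1 y.1
    | .inr (.inr i), .inr (.inr j) => i.val + 1 = j.val
    | _, _ => False)

/-- The graph obtained from `H1`, `H2` and the path `P_d = v_1 v_2 … v_d` by identifying
`u ∈ V(H1)` with `v_1` and `v ∈ V(H2)` with `v_d`.  The `Fin (d-1)` part records the path
vertices `v_2, …, v_d` (the last one being identified with `v`). -/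
def glueEnds {V1 V2 : Type*} (H1 : SimpleGraph V1) (H2 : SimpleGraph V2)
    (u : V1) (v : V2) (d : ℕ) :
    SimpleGraph (V1 ⊕ ({x : V2 // x ≠ v} ⊕ Fin (d - 1))) :=
  SimpleGraph.fromRel (fun p q =>
    match p, q with
    | .inl x, .inl y => H1.Adj x y
    | .inl x, .inr (.inr i) => x = u ∧ i.val = 0
    | .inr (.inl x), .inr (.inl y) => H2.Adj x.1 y.1
    | .inr (.inr i), .inr (.inl y) => i.val + 1 = d - 1 ∧ H2.Adj v y.1
    | .inr (.inr i), .inr (.inr j) => i.val + 1 = j.val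
    | _, _ => False)

/-- `U_{n,g}^l`: the unicyclic graph on `n` vertices obtained by joining one end vertex of
the path `P_{n-g}` to a vertex of the cycle `C_g` by an edge. -/
def UnlGraph (n g : ℕ) : SimpleGraph (Fin (n - g) ⊕ Fin g) :=
  SimpleGraph.fromRel (fun p q =>
    match p, q with
    | .inl i, .inl j => i.val + 1 = j.val
    | .inl i, .inr j => i.val + 1 = n - g ∧ j.val = 0
    | .inr i, .inr j => i.val + 1 = j.val ∨ (i.val = 0 ∧ j.val + 1 = g)
    | _, _ => False)

/-- `U_{n,g}^p`: the unicyclic graph on `n` vertices obtained by attaching `n - g` pendant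
vertices to one vertex of the cycle `C_g`. -/
def UnpGraph (n g : ℕ) : SimpleGraph (Fin g ⊕ Fin (n - g)) :=
  SimpleGraph.fromRel (fun p q =>
    match p, q with
    | .inl i, .inl j => i.val + 1 = j.val ∨ (i.val = 0 ∧ j.val + 1 = g)
    | .inl i, .inr _ => i.val = 0
    | _, _ => False)

/-- The graph obtained by joining the vertex `u` of `H` to the pendant vertex of
`U_{r,g}^l` by an edge. -/
def joinPendant {V : Type*} (H : SimpleGraph V) (u : V) (r g : ℕ) :
    SimpleGraph (V ⊕ (Fin (r - g) ⊕ Fin g)) :=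
  SimpleGraph.fromRel (fun p q =>
    match p, q with
    | .inl x, .inl y => H.Adj x y
    | .inl x, .inr (.inl i) => x = u ∧ i.val = 0
    | .inr a, .inr b => (UnlGraph r g).Adj a b
    | _, _ => False)

/-- `C_{m1,m2}^n` in the case `n = m1 + m2 - 1`: two cycles `C_{m1}` and `C_{m2}`
sharing exactly one vertex (the vertex `0`). -/
def twoCyclesGlued (m1 m2 : ℕ) : SimpleGraph (Fin (m1 + m2 - 1)) :=
  SimpleGraph.fromRel (fun i j =>
    (i.val + 1 = j.val ∧ j.val < m1) ∨ (i.val = 0 ∧ j.val + 1 = m1)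
    ∨ (i.val = 0 ∧ j.val = m1) ∨ (m1 ≤ i.val ∧ i.val + 1 = j.val)
    ∨ (i.val = 0 ∧ j.val + 2 = m1 + m2))

/-- `C_{3,3}^n` for `n > 5`: two triangles `{0,1,2}` and `{n-3,n-2,n-1}` joined by the path
`2, 3, …, n-3` (a path on `n - 4` vertices whose ends are identified with a vertex of each
triangle). -/
def C33 (n : ℕ) : SimpleGraph (Fin n) :=
  SimpleGraph.fromRel (fun i j =>
    (i.val = 0 ∧ j.val = 1) ∨ (i.val = 0 ∧ j.val = 2) ∨ (i.val = 1 ∧ j.val = 2)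
    ∨ (2 ≤ i.val ∧ i.val + 1 = j.val ∧ j.val + 3 ≤ n)
    ∨ (i.val + 3 = n ∧ j.val + 2 = n) ∨ (i.val + 2 = n ∧ j.val + 1 = n)
    ∨ (i.val + 3 = n ∧ j.val + 1 = n))

/-- `T(l, m, d)`: the tree obtained from the path `P_d` by attaching `l` pendant vertices at
one end and `m` pendant vertices at the other end. -/
def Tlmd (l m d : ℕ) : SimpleGraph (Fin d ⊕ (Fin l ⊕ Fin m)) :=
  SimpleGraph.fromRel (fun p q =>
    match p, q with
    | .inl i, .inl j => i.val + 1 = j.val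
    | .inl i, .inr (.inl _) => i.val = 0
    | .inl i, .inr (.inr _) => i.val + 1 = d
    | _, _ => False)

/-- `K_m^n(l_1, …, l_m)`: the graph obtained from the complete graph `K_m` by identifying,
for each `i`, one end vertex of a path on `l i` vertices with the `i`-th vertex of `K_m`.
The vertex `⟨i, 0⟩` is the `i`-th vertex of the complete graph. -/
def Kmn (m : ℕ) (l : Fin m → ℕ) : SimpleGraph ((i : Fin m) × Fin (l i)) :=
  SimpleGraph.fromRel (fun p q =>
    (p.1 = q.1 ∧ p.2.val + 1 = q.2.val) ∨ (p.1 ≠ q.1 ∧ p.2.val = 0 ∧ q.2.val = 0))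

/-- The graph obtained from `H`, `C_{m1}` and `C_{m2}` by identifying the vertex `w` of `H`,
a vertex of `C_{m1}` and a vertex of `C_{m2}` into one vertex. -/
def glueTwoCycles {V : Type*} (H : SimpleGraph V) (w : V) (m1 m2 : ℕ) :
    SimpleGraph (V ⊕ (Fin (m1 - 1) ⊕ Fin (m2 - 1))) :=
  SimpleGraph.fromRel (fun p q =>
    match p, q with
    | .inl x, .inl y => H.Adj x y
    | .inl x, .inr (.inl i) => x = w ∧ (i.val = 0 ∨ i.val + 2 = m1)
    | .inl x, .inr (.inr i) => x = w ∧ (i.val = 0 ∨ i.val + 2 = m2)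
    | .inr (.inl i), .inr (.inl j) => i.val + 1 = j.val
    | .inr (.inr i), .inr (.inr j) => i.val + 1 = j.val
    | _, _ => False)

/-- The graph obtained from `H` and the cycle `C_M` by identifying the vertex `w` of `H`
with one vertex of the cycle. -/
def glueOneCycle {V : Type*} (H : SimpleGraph V) (w : V) (M : ℕ) :
    SimpleGraph (V ⊕ Fin (M - 1)) :=
  SimpleGraph.fromRel (fun p q =>
    match p, q with
    | .inl x, .inl y => H.Adj x y
    | .inl x, .inr i => x = w ∧ (i.val = 0 ∨ i.val + 2 = M)
    | .inr i, .inr j => i.val + 1 = j.val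
    | _, _ => False)

namespace AttachProof
open Finset

variable {V : Type*}

lemma walk_pot {W : Type*} {H : SimpleGraph W} (f : W → ℤ)
    (hf : ∀ a b, H.Adj a b → |f a - f b| ≤ 1) {p q : W} (w : H.Walk p q) :
    |f p - f q| ≤ (w.length : ℤ) := by
  induction w with
  | nil => simp
  | @cons u x y h w ih =>
    calc |f u - f y| ≤ |f u - f x| + |f x - f y| := abs_sub_le _ _ _
    _ ≤ 1 + (w.length : ℤ) := add_le_add (hf _ _ h) ih
    _ ≤ ((Walk.cons h w).length : ℤ) := by rw [Walk.length_cons]; push_cast; omega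

lemma dist_pot {W : Type*} {H : SimpleGraph W} (f : W → ℤ)
    (hf : ∀ a b, H.Adj a b → |f a - f b| ≤ 1) {p q : W} (h : H.Reachable p q) :
    |f p - f q| ≤ (H.dist p q : ℤ) := by
  obtain ⟨w, hw⟩ := h.exists_walk_length_eq_dist
  rw [← hw]; exact walk_pot f hf w

lemma dist_retract {W : Type*} (G : SimpleGraph V) {H : SimpleGraph W} (r : W → V)
    (hG : G.Connected)
    (hr : ∀ a b, H.Adj a b → G.dist (r a) (r b) ≤ 1) {p q : W} (h : H.Reachable p q) :
    G.dist (r p) (r q) ≤ H.dist p q := by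
  obtain ⟨w, hw⟩ := h.exists_walk_length_eq_dist
  rw [← hw]; clear hw h
  induction w with
  | nil => simp
  | @cons u x y h w ih =>
    rw [Walk.length_cons]
    calc G.dist (r u) (r y) ≤ G.dist (r u) (r x) + G.dist (r x) (r y) := hG.dist_triangle
    _ ≤ 1 + w.length := add_le_add (hr _ _ h) ih
    _ = w.length + 1 := by omega

lemma ecc_eq_sup [Fintype V] (G : SimpleGraph V) (x : V) :
    ecc G x = Finset.univ.sup (G.dist x) := (Finset.sup_univ_eq_ciSup _).symm

lemma dist_le_ecc [Fintype V] (G : SimpleGraph V) (x y : V) : G.dist x y ≤ ecc G x := by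
  rw [ecc_eq_sup]; exact Finset.le_sup (Finset.mem_univ y)

lemma exists_ecc [Fintype V] [Nonempty V] (G : SimpleGraph V) (x : V) :
    ∃ y, G.dist x y = ecc G x := by
  rw [ecc_eq_sup]
  obtain ⟨y, -, hy⟩ := Finset.exists_mem_eq_sup Finset.univ Finset.univ_nonempty (G.dist x)
  exact ⟨y, hy.symm⟩

end AttachProof
namespace AttachProof
variable {V : Type*} (G : SimpleGraph V) (v : V) (a b : ℕ)

/-- embedding of `G` -/
def homInl : G →g attachTwoPaths G v a b where
  toFun := Sum.inl
  map_rel' := fun {x y} h => by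
    rw [attachTwoPaths, fromRel_adj]
    exact ⟨by simp [h.ne], Or.inl h⟩

lemma adj_root_a (i : Fin a) (h0 : i.val = 0) :
    (attachTwoPaths G v a b).Adj (.inl v) (.inr (.inl i)) := by
  rw [attachTwoPaths, fromRel_adj]
  exact ⟨by simp, Or.inl ⟨rfl, h0⟩⟩

lemma adj_root_b (j : Fin b) (h0 : j.val = 0) :
    (attachTwoPaths G v a b).Adj (.inl v) (.inr (.inr j)) := by
  rw [attachTwoPaths, fromRel_adj]
  exact ⟨by simp, Or.inl ⟨rfl, h0⟩⟩

lemma adj_seg_a (i j : Fin a) (hij : i.val + 1 = j.val) :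
    (attachTwoPaths G v a b).Adj (.inr (.inl i)) (.inr (.inl j)) := by
  rw [attachTwoPaths, fromRel_adj]
  refine ⟨by simp [Fin.ext_iff]; omega, Or.inl hij⟩

lemma adj_seg_b (i j : Fin b) (hij : i.val + 1 = j.val) :
    (attachTwoPaths G v a b).Adj (.inr (.inr i)) (.inr (.inr j)) := by
  rw [attachTwoPaths, fromRel_adj]
  refine ⟨by simp [Fin.ext_iff]; omega, Or.inl hij⟩

lemma walk_seg_a : ∀ (d : ℕ) (i j : Fin a), i.val + d = j.val →
    ∃ w : (attachTwoPaths G v a b).Walk (.inr (.inl i)) (.inr (.inl j)), w.length = d := by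
  intro d
  induction d with
  | zero =>
    intro i j hij
    have : i = j := Fin.ext (by omega)
    subst this
    exact ⟨.nil, rfl⟩
  | succ n ih =>
    intro i j hij
    have hj' : i.val + n < a := by omega
    obtain ⟨w, hw⟩ := ih i ⟨i.val + n, hj'⟩ rfl
    exact ⟨w.concat (adj_seg_a G v a b _ j (by simp; omega)), by
      rw [Walk.length_concat, hw]⟩

lemma walk_seg_b : ∀ (d : ℕ) (i j : Fin b), i.val + d = j.val →
    ∃ w : (attachTwoPaths G v a b).Walk (.inr (.inr i)) (.inr (.inr j)), w.length = d := by
  intro d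
  induction d with
  | zero =>
    intro i j hij
    have : i = j := Fin.ext (by omega)
    subst this
    exact ⟨.nil, rfl⟩
  | succ n ih =>
    intro i j hij
    have hj' : i.val + n < b := by omega
    obtain ⟨w, hw⟩ := ih i ⟨i.val + n, hj'⟩ rfl
    exact ⟨w.concat (adj_seg_b G v a b _ j (by simp; omega)), by
      rw [Walk.length_concat, hw]⟩

lemma walk_root_a (i : Fin a) :
    ∃ w : (attachTwoPaths G v a b).Walk (.inl v) (.inr (.inl i)), w.length = i.val + 1 := by
  have hpos : 0 < a := i.pos
  obtain ⟨w, hw⟩ := walk_seg_a G v a b i.val ⟨0, hpos⟩ i (by simp)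
  exact ⟨.cons (adj_root_a G v a b ⟨0, hpos⟩ rfl) w, by simp [hw]⟩

lemma walk_root_b (j : Fin b) :
    ∃ w : (attachTwoPaths G v a b).Walk (.inl v) (.inr (.inr j)), w.length = j.val + 1 := by
  have hpos : 0 < b := j.pos
  obtain ⟨w, hw⟩ := walk_seg_b G v a b j.val ⟨0, hpos⟩ j (by simp)
  exact ⟨.cons (adj_root_b G v a b ⟨0, hpos⟩ rfl) w, by simp [hw]⟩

lemma conn' (hG : G.Connected) : (attachTwoPaths G v a b).Connected := by
  have hroot : ∀ p, (attachTwoPaths G v a b).Reachable p (.inl v) := by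
    rintro (x | i | j)
    · exact Reachable.map (homInl G v a b) (hG x v)
    · exact ((walk_root_a G v a b i).choose.reverse).reachable
    · exact ((walk_root_b G v a b j).choose.reverse).reachable
  rw [connected_iff]
  exact ⟨fun p q => (hroot p).trans (hroot q).symm, ⟨.inl v⟩⟩

end AttachProof
namespace AttachProof
variable {V : Type*} (G : SimpleGraph V) (v : V) (a b : ℕ)

/-- potential for lower bounds towards the `a`-path -/
noncomputable def pot1 : V ⊕ (Fin a ⊕ Fin b) → ℤ
  | .inl x => -(G.dist v x : ℤ)
  | .inr (.inl i) => ((i : ℕ) : ℤ) + 1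
  | .inr (.inr j) => -((j : ℕ) : ℤ) - 1

/-- potential for lower bounds towards the `b`-path -/
noncomputable def pot2 : V ⊕ (Fin a ⊕ Fin b) → ℤ
  | .inl x => -(G.dist v x : ℤ)
  | .inr (.inl i) => -((i : ℕ) : ℤ) - 1
  | .inr (.inr j) => ((j : ℕ) : ℤ) + 1

lemma dist_lip (hG : G.Connected) {x y : V} (h : G.Adj x y) :
    G.dist v y ≤ G.dist v x + 1 := by
  have h1 := hG.dist_triangle (u := v) (v := x) (w := y)
  have h2 : G.dist x y = 1 := dist_eq_one_iff_adj.mpr h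
  omega

set_option linter.unnecessarySeqFocus false in
lemma pot1_lip (hG : G.Connected) :
    ∀ p q, (attachTwoPaths G v a b).Adj p q → |pot1 G v a b p - pot1 G v a b q| ≤ 1 := by
  rintro (x | i | j) (y | i' | j') h <;>
    rw [attachTwoPaths, fromRel_adj] at h <;>
    obtain ⟨hne, h | h⟩ := h <;>
    simp only [pot1] <;>
    first
    | exact h.elim
    | (try obtain ⟨rfl, h0⟩ := h) <;>
      (try simp only [dist_self, h0]) <;>
      rw [abs_le] <;>
      constructor <;>
      push_cast <;>
      first
        | omega
        | (have := dist_lip G v hG h; omega)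
        | (have := dist_lip G v hG h.symm; omega)

set_option linter.unnecessarySeqFocus false in
lemma pot2_lip (hG : G.Connected) :
    ∀ p q, (attachTwoPaths G v a b).Adj p q → |pot2 G v a b p - pot2 G v a b q| ≤ 1 := by
  rintro (x | i | j) (y | i' | j') h <;>
    rw [attachTwoPaths, fromRel_adj] at h <;>
    obtain ⟨hne, h | h⟩ := h <;>
    simp only [pot2] <;>
    first
    | exact h.elim
    | (try obtain ⟨rfl, h0⟩ := h) <;>
      (try simp only [dist_self, h0]) <;>
      rw [abs_le] <;>
      constructor <;>
      push_cast <;>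
      first
        | omega
        | (have := dist_lip G v hG h; omega)
        | (have := dist_lip G v hG h.symm; omega)

set_option linter.unnecessarySeqFocus false in
lemma retract_lip (hG : G.Connected) :
    ∀ p q, (attachTwoPaths G v a b).Adj p q →
      G.dist (Sum.elim id (fun _ => v) p) (Sum.elim id (fun _ => v) q) ≤ 1 := by
  rintro (x | i | j) (y | i' | j') h <;>
    rw [attachTwoPaths, fromRel_adj] at h <;>
    obtain ⟨hne, h | h⟩ := h <;>
    simp only [Sum.elim_inl, Sum.elim_inr, id] <;>
    first
    | exact h.elim
    | exact le_of_eq (dist_eq_one_iff_adj.mpr h)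
    | exact le_of_eq (dist_eq_one_iff_adj.mpr h.symm)
    | (obtain ⟨rfl, h0⟩ := h
       simp [SimpleGraph.dist_self])
    | simp [SimpleGraph.dist_self]

end AttachProof
namespace AttachProof
variable {V : Type*} (G : SimpleGraph V) (v : V) (a b : ℕ)

lemma dist_inl_inl_le (hG : G.Connected) (x y : V) :
    (attachTwoPaths G v a b).dist (.inl x) (.inl y) ≤ G.dist x y := by
  obtain ⟨p, hp⟩ := (hG x y).exists_walk_length_eq_dist
  have := dist_le (p.map (homInl G v a b))
  rwa [Walk.length_map, hp] at this

lemma dist_root_a (i : Fin a) :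
    (attachTwoPaths G v a b).dist (.inl v) (.inr (.inl i)) ≤ i.val + 1 := by
  obtain ⟨w, hw⟩ := walk_root_a G v a b i
  exact hw ▸ dist_le w

lemma dist_root_b (j : Fin b) :
    (attachTwoPaths G v a b).dist (.inl v) (.inr (.inr j)) ≤ j.val + 1 := by
  obtain ⟨w, hw⟩ := walk_root_b G v a b j
  exact hw ▸ dist_le w

variable [Fintype V]

lemma ecc_inl (hG : G.Connected) (hab : a ≤ b) (hb : 1 ≤ b) (x : V) :
    ecc (attachTwoPaths G v a b) (.inl x) = max (ecc G x) (G.dist v x + b) := by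
  have hc := conn' G v a b hG
  have hne : Nonempty V := ⟨v⟩
  apply le_antisymm
  · rw [ecc_eq_sup]
    apply Finset.sup_le
    rintro (y | i | j) -
    · exact le_max_of_le_left ((dist_inl_inl_le G v a b hG x y).trans (dist_le_ecc G x y))
    · refine le_max_of_le_right ?_
      calc (attachTwoPaths G v a b).dist (.inl x) (.inr (.inl i))
          ≤ (attachTwoPaths G v a b).dist (.inl x) (.inl v)
            + (attachTwoPaths G v a b).dist (.inl v) (.inr (.inl i)) := hc.dist_triangle
        _ ≤ G.dist x v + (i.val + 1) :=
            add_le_add (dist_inl_inl_le G v a b hG x v) (dist_root_a G v a b i)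
        _ ≤ G.dist v x + b := by rw [dist_comm (u := x)]; have := i.isLt; omega
    · refine le_max_of_le_right ?_
      calc (attachTwoPaths G v a b).dist (.inl x) (.inr (.inr j))
          ≤ (attachTwoPaths G v a b).dist (.inl x) (.inl v)
            + (attachTwoPaths G v a b).dist (.inl v) (.inr (.inr j)) := hc.dist_triangle
        _ ≤ G.dist x v + (j.val + 1) :=
            add_le_add (dist_inl_inl_le G v a b hG x v) (dist_root_b G v a b j)
        _ ≤ G.dist v x + b := by rw [dist_comm (u := x)]; have := j.isLt; omega
  · apply max_le
    · obtain ⟨y, hy⟩ := exists_ecc G x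
      calc ecc G x = G.dist x y := hy.symm
        _ ≤ (attachTwoPaths G v a b).dist (.inl x) (.inl y) := by
            have := dist_retract G (Sum.elim id (fun _ => v)) hG
              (retract_lip G v a b hG) (hc.preconnected (.inl x) (.inl y))
            simpa using this
        _ ≤ _ := dist_le_ecc _ _ _
    · have hpot := dist_pot (pot2 G v a b) (pot2_lip G v a b hG)
        (hc.preconnected (.inl x) (.inr (.inr ⟨b - 1, by omega⟩)))
      simp only [pot2] at hpot
      obtain ⟨h2, -⟩ := abs_le.mp hpot
      have hd := dist_le_ecc (attachTwoPaths G v a b) (.inl x) (.inr (.inr ⟨b - 1, by omega⟩))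
      omega

lemma ecc_ka (hG : G.Connected) (hab : a ≤ b) (hb : 1 ≤ b) (i : Fin a) :
    ecc (attachTwoPaths G v a b) (.inr (.inl i)) = i.val + 1 + max (ecc G v) b := by
  have hc := conn' G v a b hG
  have hne : Nonempty V := ⟨v⟩
  have hroot : (attachTwoPaths G v a b).dist (.inr (.inl i)) (.inl v) ≤ i.val + 1 := by
    rw [dist_comm]; exact dist_root_a G v a b i
  apply le_antisymm
  · rw [ecc_eq_sup]
    apply Finset.sup_le
    rintro (y | i' | j) -
    · calc (attachTwoPaths G v a b).dist (.inr (.inl i)) (.inl y)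
          ≤ (attachTwoPaths G v a b).dist (.inr (.inl i)) (.inl v)
            + (attachTwoPaths G v a b).dist (.inl v) (.inl y) := hc.dist_triangle
        _ ≤ (i.val + 1) + G.dist v y :=
            add_le_add hroot (dist_inl_inl_le G v a b hG v y)
        _ ≤ i.val + 1 + max (ecc G v) b := by
            have := dist_le_ecc G v y; omega
    · calc (attachTwoPaths G v a b).dist (.inr (.inl i)) (.inr (.inl i'))
          ≤ (attachTwoPaths G v a b).dist (.inr (.inl i)) (.inl v)
            + (attachTwoPaths G v a b).dist (.inl v) (.inr (.inl i')) := hc.dist_triangle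
        _ ≤ (i.val + 1) + (i'.val + 1) := add_le_add hroot (dist_root_a G v a b i')
        _ ≤ i.val + 1 + max (ecc G v) b := by have := i'.isLt; omega
    · calc (attachTwoPaths G v a b).dist (.inr (.inl i)) (.inr (.inr j))
          ≤ (attachTwoPaths G v a b).dist (.inr (.inl i)) (.inl v)
            + (attachTwoPaths G v a b).dist (.inl v) (.inr (.inr j)) := hc.dist_triangle
        _ ≤ (i.val + 1) + (j.val + 1) := add_le_add hroot (dist_root_b G v a b j)
        _ ≤ i.val + 1 + max (ecc G v) b := by have := j.isLt; omega
  · obtain ⟨y, hy⟩ := exists_ecc G v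
    have hp1 := dist_pot (pot1 G v a b) (pot1_lip G v a b hG)
      (hc.preconnected (.inr (.inl i)) (.inl y))
    have hp2 := dist_pot (pot1 G v a b) (pot1_lip G v a b hG)
      (hc.preconnected (.inr (.inl i)) (.inr (.inr ⟨b - 1, by omega⟩)))
    simp only [pot1, Fin.val_mk] at hp1 hp2
    obtain ⟨-, h1⟩ := abs_le.mp hp1
    obtain ⟨-, h2⟩ := abs_le.mp hp2
    have hd1 := dist_le_ecc (attachTwoPaths G v a b) (.inr (.inl i)) (.inl y)
    have hd2 := dist_le_ecc (attachTwoPaths G v a b) (.inr (.inl i)) (.inr (.inr ⟨b - 1, by omega⟩))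
    rw [hy] at h1
    omega

lemma ecc_kb (hG : G.Connected) (hab : a ≤ b) (hb : 1 ≤ b) (j : Fin b) :
    ecc (attachTwoPaths G v a b) (.inr (.inr j))
      = max (j.val + 1 + max (ecc G v) a) (b - 1 - j.val) := by
  have hc := conn' G v a b hG
  have hne : Nonempty V := ⟨v⟩
  have hroot : (attachTwoPaths G v a b).dist (.inr (.inr j)) (.inl v) ≤ j.val + 1 := by
    rw [dist_comm]; exact dist_root_b G v a b j
  apply le_antisymm
  · rw [ecc_eq_sup]
    apply Finset.sup_le
    rintro (y | i' | j') -
    · refine le_max_of_le_left ?_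
      calc (attachTwoPaths G v a b).dist (.inr (.inr j)) (.inl y)
          ≤ (attachTwoPaths G v a b).dist (.inr (.inr j)) (.inl v)
            + (attachTwoPaths G v a b).dist (.inl v) (.inl y) := hc.dist_triangle
        _ ≤ (j.val + 1) + G.dist v y :=
            add_le_add hroot (dist_inl_inl_le G v a b hG v y)
        _ ≤ j.val + 1 + max (ecc G v) a := by have := dist_le_ecc G v y; omega
    · refine le_max_of_le_left ?_
      calc (attachTwoPaths G v a b).dist (.inr (.inr j)) (.inr (.inl i'))
          ≤ (attachTwoPaths G v a b).dist (.inr (.inr j)) (.inl v)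
            + (attachTwoPaths G v a b).dist (.inl v) (.inr (.inl i')) := hc.dist_triangle
        _ ≤ (j.val + 1) + (i'.val + 1) := add_le_add hroot (dist_root_a G v a b i')
        _ ≤ j.val + 1 + max (ecc G v) a := by have := i'.isLt; omega
    · rcases le_total j.val j'.val with hjj | hjj
      · refine le_max_of_le_right ?_
        obtain ⟨w, hw⟩ := walk_seg_b G v a b (j'.val - j.val) j j' (by omega)
        have := dist_le w
        rw [hw] at this
        have := j'.isLt
        omega
      · refine le_max_of_le_left ?_
        obtain ⟨w, hw⟩ := walk_seg_b G v a b (j.val - j'.val) j' j (by omega)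
        have hle := dist_le w
        rw [hw] at hle
        rw [dist_comm]
        omega
  · obtain ⟨y, hy⟩ := exists_ecc G v
    have hp1 := dist_pot (pot2 G v a b) (pot2_lip G v a b hG)
      (hc.preconnected (.inr (.inr j)) (.inl y))
    have hp3 := dist_pot (pot2 G v a b) (pot2_lip G v a b hG)
      (hc.preconnected (.inr (.inr j)) (.inr (.inr ⟨b - 1, by omega⟩)))
    simp only [pot2, Fin.val_mk] at hp1 hp3
    obtain ⟨-, h1⟩ := abs_le.mp hp1
    obtain ⟨h3, -⟩ := abs_le.mp hp3
    have hd1 := dist_le_ecc (attachTwoPaths G v a b) (.inr (.inr j)) (.inl y)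
    have hd3 := dist_le_ecc (attachTwoPaths G v a b) (.inr (.inr j)) (.inr (.inr ⟨b - 1, by omega⟩))
    rw [hy] at h1
    rcases Nat.eq_zero_or_pos a with ha | ha
    · subst ha; omega
    · have hp2 := dist_pot (pot2 G v a b) (pot2_lip G v a b hG)
        (hc.preconnected (.inr (.inr j)) (.inr (.inl ⟨a - 1, by omega⟩)))
      simp only [pot2, Fin.val_mk] at hp2
      obtain ⟨-, h2⟩ := abs_le.mp hp2
      have hd2 := dist_le_ecc (attachTwoPaths G v a b) (.inr (.inr j)) (.inr (.inl ⟨a - 1, by omega⟩))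
      omega

end AttachProof
namespace AttachProof
variable {V : Type*} [Fintype V] (G : SimpleGraph V) (v : V) (a b : ℕ)

lemma totalEcc_attach (hG : G.Connected) (hab : a ≤ b) (hb : 1 ≤ b) :
    totalEcc (attachTwoPaths G v a b)
      = (∑ x, max (ecc G x) (G.dist v x + b))
        + ((∑ i : Fin a, (i.val + 1 + max (ecc G v) b))
          + (∑ j : Fin b, max (j.val + 1 + max (ecc G v) a) (b - 1 - j.val))) := by
  rw [totalEcc, Fintype.sum_sum_type, Fintype.sum_sum_type]
  congr 1
  · exact Finset.sum_congr rfl fun x _ => ecc_inl G v a b hG hab hb x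
  congr 1
  · exact Finset.sum_congr rfl fun i _ => ecc_ka G v a b hG hab hb i
  · exact Finset.sum_congr rfl fun j _ => ecc_kb G v a b hG hab hb j

end AttachProof


-- STATEMENT 1
theorem stmt1 {V : Type*} [Fintype V] (G : SimpleGraph V) (hG : G.Connected)
    (hV : 2 ≤ Fintype.card V) (v : V) (k l : ℕ) (hk : 1 ≤ k) (hkl : k ≤ l) :
    totalEcc (attachTwoPaths G v k l) < totalEcc (attachTwoPaths G v (k - 1) (l + 1)) := by
  open AttachProof in
  have hne : Nonempty V := ⟨v⟩
  have hE1 : 1 ≤ ecc G v := by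
    obtain ⟨y, hy⟩ := Fintype.exists_ne_of_one_lt_card (by omega) v
    have h1 := hG.pos_dist_of_ne (Ne.symm hy)
    have h2 := dist_le_ecc G v y
    omega
  have hdE : ∀ x, ecc G x ≤ G.dist v x + ecc G v := by
    intro x
    rw [ecc_eq_sup]
    apply Finset.sup_le
    intro y _
    calc G.dist x y ≤ G.dist x v + G.dist v y := hG.dist_triangle
      _ ≤ G.dist v x + ecc G v := by
          rw [dist_comm (u := x)]
          exact add_le_add_right (dist_le_ecc G v y) _
  obtain ⟨k', rfl⟩ : ∃ k', k = k' + 1 := ⟨k - 1, by omega⟩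
  show totalEcc (attachTwoPaths G v (k' + 1) l) < totalEcc (attachTwoPaths G v k' (l + 1))
  rw [totalEcc_attach G v (k' + 1) l hG hkl (by omega),
      totalEcc_attach G v k' (l + 1) hG (by omega) (by omega)]
  simp only [Nat.add_sub_cancel]
  set E := ecc G v with hE
  -- case analysis
  rcases le_or_gt (l + 1) E with hcA | hcA
  · -- Case A : E ≥ l + 1, all maxes are E
    have m1 : max E l = E := by omega
    have m2 : max E (l + 1) = E := by omega
    have m3 : max E (k' + 1) = E := by omega
    have m4 : max E k' = E := by omega
    rw [m1, m2, m3, m4]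
    have hx : (∑ x, max (ecc G x) (G.dist v x + l))
        ≤ ∑ x, max (ecc G x) (G.dist v x + (l + 1)) :=
      Finset.sum_le_sum (fun x _ => by omega)
    have hkk : (∑ i : Fin (k' + 1), (i.val + 1 + E))
        = (∑ i : Fin k', (i.val + 1 + E)) + (k' + 1 + E) := by
      rw [Fin.sum_univ_castSucc]
      simp
    have hll : (∑ j : Fin l, max (j.val + 1 + E) (l - 1 - j.val)) + (l + 1 + E)
        ≤ ∑ j : Fin (l + 1), max (j.val + 1 + E) (l - j.val) := by
      rw [Fin.sum_univ_castSucc]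
      have h1 : (∑ j : Fin l, max (j.val + 1 + E) (l - 1 - j.val))
          ≤ ∑ j : Fin l, max (((Fin.castSucc j).val) + 1 + E) (l - (Fin.castSucc j).val) :=
        Finset.sum_le_sum (fun j _ => by simp; omega)
      simp only [Fin.val_last]
      omega
    omega
  rcases le_or_gt (k' + 1) E with hcB | hcB
  · -- Case B : k ≤ E ≤ l
    have m1 : max E l = l := by omega
    have m2 : max E (l + 1) = l + 1 := by omega
    have m3 : max E (k' + 1) = E := by omega
    have m4 : max E k' = E := by omega
    rw [m1, m2, m3, m4]
    have hx : (∑ x, max (ecc G x) (G.dist v x + l))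
        ≤ ∑ x, max (ecc G x) (G.dist v x + (l + 1)) :=
      Finset.sum_le_sum (fun x _ => by omega)
    have hkk : (∑ i : Fin (k' + 1), (i.val + 1 + l))
        = (1 + l) + (∑ i : Fin k', (i.val + 1 + (l + 1))) := by
      rw [Fin.sum_univ_succ]
      simp only [Fin.val_zero, Fin.val_succ]
      congr 1
      exact Finset.sum_congr rfl (fun i _ => by omega)
    have hll : (∑ j : Fin l, max (j.val + 1 + E) (l - 1 - j.val)) + (l + 1 + E)
        ≤ ∑ j : Fin (l + 1), max (j.val + 1 + E) (l - j.val) := by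
      rw [Fin.sum_univ_castSucc]
      have h1 : (∑ j : Fin l, max (j.val + 1 + E) (l - 1 - j.val))
          ≤ ∑ j : Fin l, max (((Fin.castSucc j).val) + 1 + E) (l - (Fin.castSucc j).val) :=
        Finset.sum_le_sum (fun j _ => by simp; omega)
      simp only [Fin.val_last]
      omega
    omega
  · -- Case C : E ≤ k'
    have m1 : max E l = l := by omega
    have m2 : max E (l + 1) = l + 1 := by omega
    have m3 : max E (k' + 1) = k' + 1 := by omega
    have m4 : max E k' = k' := by omega
    rw [m1, m2, m3, m4]
    have hx : ∑ x, max (ecc G x) (G.dist v x + (l + 1))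
        = (∑ x, (max (ecc G x) (G.dist v x + l) + 1)) :=
      Finset.sum_congr rfl (fun x _ => by have := hdE x; omega)
    rw [Finset.sum_add_distrib, Finset.sum_const, smul_eq_mul, mul_one,
      Finset.card_univ] at hx
    have hkk : (∑ i : Fin (k' + 1), (i.val + 1 + l))
        = (1 + l) + (∑ i : Fin k', (i.val + 1 + (l + 1))) := by
      rw [Fin.sum_univ_succ]
      simp only [Fin.val_zero, Fin.val_succ]
      congr 1
      exact Finset.sum_congr rfl (fun i _ => by omega)
    have hll : (∑ j : Fin (l + 1), max (j.val + 1 + k') (l - j.val))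
        = l + ∑ j : Fin l, max (j.val + 1 + (k' + 1)) (l - 1 - j.val) := by
      rw [Fin.sum_univ_succ]
      simp only [Fin.val_zero, Fin.val_succ]
      congr 1
      · omega
      · exact Finset.sum_congr rfl (fun j _ => by omega)
    omega
end

section
/- Let H_1 and H_2 be two connected graphs each with at least two vertices, and let P = v_1 v_2 … v_d be a path on d ≥ 2 vertices. Let u ∈ V(H_1) and v ∈ V(H_2). Let G be the graph obtained from H_1, H_2 and P by identifying the three vertices u, v and v_1 into a single vertex, and let G' be the graph obtained from H_1, H_2 and P by identifying u with v_1 and identifying v with v_d. Then ε(G') > ε(G). -/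
open SimpleGraph

set_option linter.unusedSectionVars false
set_option maxHeartbeats 1000000

section Helpers

variable {V : Type*}

private lemma adj_dist_le_one {G : SimpleGraph V} {a b : V} (h : G.Adj a b) : G.dist a b ≤ 1 :=
  SimpleGraph.dist_le h.toWalk

/-- Walks witnessing distance upper bounds. -/
private def Rle (G : SimpleGraph V) (s t : V) (n : ℕ) : Prop := ∃ p : G.Walk s t, p.length ≤ n

private lemma Rle.of_adj {G : SimpleGraph V} {a b : V} (h : G.Adj a b) : Rle G a b 1 :=
  ⟨h.toWalk, le_rfl⟩

private lemma Rle.refl (G : SimpleGraph V) (a : V) : Rle G a a 0 := ⟨SimpleGraph.Walk.nil, le_rfl⟩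

private lemma Rle.trans {G : SimpleGraph V} {a b c : V} {m n : ℕ}
    (h1 : Rle G a b m) (h2 : Rle G b c n) : Rle G a c (m + n) := by
  obtain ⟨p, hp⟩ := h1; obtain ⟨q, hq⟩ := h2
  exact ⟨p.append q, by rw [SimpleGraph.Walk.length_append]; omega⟩

private lemma Rle.trans_adj {G : SimpleGraph V} {a b c : V} {m : ℕ}
    (h1 : Rle G a b m) (h2 : G.Adj b c) : Rle G a c (m + 1) :=
  h1.trans (Rle.of_adj h2)

private lemma Rle.symm {G : SimpleGraph V} {a b : V} {m : ℕ} (h : Rle G a b m) : Rle G b a m := by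
  obtain ⟨p, hp⟩ := h; exact ⟨p.reverse, by simpa using hp⟩

private lemma Rle.mono {G : SimpleGraph V} {a b : V} {m n : ℕ} (h : Rle G a b m) (hmn : m ≤ n) :
    Rle G a b n := by obtain ⟨p, hp⟩ := h; exact ⟨p, hp.trans hmn⟩

private lemma Rle.dist_le {G : SimpleGraph V} {a b : V} {m : ℕ} (h : Rle G a b m) :
    G.dist a b ≤ m := by obtain ⟨p, hp⟩ := h; exact le_trans (SimpleGraph.dist_le p) hp

private lemma Rle.reachable {G : SimpleGraph V} {a b : V} {m : ℕ} (h : Rle G a b m) :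
    G.Reachable a b := by obtain ⟨p, _⟩ := h; exact ⟨p⟩

private lemma rle_map {W : Type*} {A : SimpleGraph V} {B : SimpleGraph W} (f : A →g B)
    (hA : A.Connected) (x y : V) : Rle B (f x) (f y) (A.dist x y) := by
  obtain ⟨p, hp⟩ := hA.exists_walk_length_eq_dist x y
  exact ⟨p.map f, by rw [SimpleGraph.Walk.length_map]; omega⟩

/-- potential-based lower bound -/
private lemma walk_lower {G : SimpleGraph V} (φ : V → ℕ)
    (hφ : ∀ a b, G.Adj a b → φ a ≤ φ b + 1) {s t : V} (p : G.Walk s t) :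
    φ s ≤ φ t + p.length := by
  induction p with
  | nil => simp
  | cons h' p ih => have := hφ _ _ h'; simp only [SimpleGraph.Walk.length_cons]; omega

private lemma dist_lower {G : SimpleGraph V} (φ : V → ℕ)
    (hφ : ∀ a b, G.Adj a b → φ a ≤ φ b + 1) {s t : V} (h : G.Reachable s t) :
    φ s ≤ φ t + G.dist s t := by
  obtain ⟨p, hp⟩ := h.exists_walk_length_eq_dist
  simpa [hp] using walk_lower φ hφ p

private lemma le_iSup_nat {ι : Sort*} [Finite ι] (f : ι → ℕ) (i : ι) : f i ≤ ⨆ j, f j :=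
  le_ciSup (Set.Finite.bddAbove (Set.finite_range f)) i

private lemma exists_iSup_eq {ι : Type*} [Finite ι] [Nonempty ι] (f : ι → ℕ) :
    ∃ i, (⨆ j, f j) = f i := by
  obtain ⟨i, hi⟩ := Finite.exists_max f
  exact ⟨i, le_antisymm (ciSup_le hi) (le_iSup_nat f i)⟩

private lemma dist_lt_card [Fintype V] {G : SimpleGraph V} {a b : V} (h : G.Reachable a b) :
    G.dist a b < Fintype.card V := by
  classical
  obtain ⟨p⟩ := h
  exact lt_of_le_of_lt (SimpleGraph.dist_le p.bypass) p.bypass_isPath.length_lt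

end Helpers


section GraphLayer

variable {V1 V2 : Type*} [DecidableEq V2] (H1 : SimpleGraph V1) (H2 : SimpleGraph V2)
  (u : V1) (v : V2) (d : ℕ)

private def midHom1 : H1 →g glueMid H1 H2 u v d :=
  ⟨Sum.inl, by
    intro a b h
    rw [glueMid, SimpleGraph.fromRel_adj]
    exact ⟨by simp [h.ne], Or.inl h⟩⟩

private def midMap2 : V2 → (V1 ⊕ ({x : V2 // x ≠ v} ⊕ Fin (d - 1))) := fun y =>
  if h : y = v then Sum.inl u else Sum.inr (Sum.inl ⟨y, h⟩)

private lemma midMap2_v : midMap2 u v d v = Sum.inl u := by simp [midMap2]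

private lemma midMap2_ne {y : V2} (h : y ≠ v) :
    midMap2 u v d y = Sum.inr (Sum.inl ⟨y, h⟩) := by simp [midMap2, h]

private def midHom2 : H2 →g glueMid H1 H2 u v d :=
  ⟨midMap2 u v d, by
    intro a b hab
    have hne := hab.ne
    rw [glueMid, SimpleGraph.fromRel_adj]
    by_cases ha : a = v <;> by_cases hb : b = v
    · exact absurd (ha.trans hb.symm) hne
    · rw [show midMap2 u v d a = Sum.inl u from by simp [midMap2, ha], midMap2_ne u v d hb]
      exact ⟨by simp, Or.inl ⟨rfl, ha ▸ hab⟩⟩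
    · rw [show midMap2 u v d b = Sum.inl u from by simp [midMap2, hb], midMap2_ne u v d ha]
      exact ⟨by simp, Or.inr ⟨rfl, hb ▸ hab.symm⟩⟩
    · rw [midMap2_ne u v d ha, midMap2_ne u v d hb]
      exact ⟨by simp [Subtype.ext_iff, hne], Or.inl hab⟩⟩

private lemma mid_adj_pp {i j : Fin (d - 1)} (hij : i.val + 1 = j.val) :
    (glueMid H1 H2 u v d).Adj (Sum.inr (Sum.inr i)) (Sum.inr (Sum.inr j)) := by
  rw [glueMid, SimpleGraph.fromRel_adj]
  refine ⟨by simp [Fin.ext_iff]; omega, Or.inl hij⟩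

private lemma mid_adj_u0 (h0 : 0 < d - 1) :
    (glueMid H1 H2 u v d).Adj (Sum.inl u) (Sum.inr (Sum.inr ⟨0, h0⟩)) := by
  rw [glueMid, SimpleGraph.fromRel_adj]
  exact ⟨by simp, Or.inl ⟨rfl, rfl⟩⟩

private lemma mid_rle_u_path : ∀ (n : ℕ) (hn : n < d - 1),
    Rle (glueMid H1 H2 u v d) (Sum.inl u) (Sum.inr (Sum.inr ⟨n, hn⟩)) (n + 1) := by
  intro n
  induction n with
  | zero => exact fun hn => Rle.of_adj (mid_adj_u0 H1 H2 u v d hn)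
  | succ m ih =>
    intro hn
    exact (ih (by omega)).trans_adj (mid_adj_pp H1 H2 u v d (by simp))

private lemma mid_rle_pp : ∀ (k : ℕ) (i j : Fin (d - 1)), i.val + k = j.val →
    Rle (glueMid H1 H2 u v d) (Sum.inr (Sum.inr i)) (Sum.inr (Sum.inr j)) k := by
  intro k
  induction k with
  | zero => intro i j hij; rw [show j = i from Fin.ext (by omega)]; exact Rle.refl _ _
  | succ m ih =>
    intro i j hij
    have hlt : i.val + m < d - 1 := by have := j.isLt; omega
    exact (ih i ⟨i.val + m, hlt⟩ rfl).trans_adj (mid_adj_pp H1 H2 u v d (by simp; omega))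

end GraphLayer

section EndsLayer

variable {V1 V2 : Type*} [DecidableEq V2] (H1 : SimpleGraph V1) (H2 : SimpleGraph V2)
  (u : V1) (v : V2) (d : ℕ)

private def endsHom1 : H1 →g glueEnds H1 H2 u v d :=
  ⟨Sum.inl, by
    intro a b h
    rw [glueEnds, SimpleGraph.fromRel_adj]
    exact ⟨by simp [h.ne], Or.inl h⟩⟩

private def endsMap2 (v : V2) (d : ℕ) (hd : 2 ≤ d) : V2 → (V1 ⊕ ({x : V2 // x ≠ v} ⊕ Fin (d - 1))) := fun y =>
  if h : y = v then Sum.inr (Sum.inr ⟨d - 2, by omega⟩) else Sum.inr (Sum.inl ⟨y, h⟩)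

private lemma endsMap2_v (hd : 2 ≤ d) :
    endsMap2 (V1 := V1) v d hd v = Sum.inr (Sum.inr ⟨d - 2, by omega⟩) := by simp [endsMap2]

private lemma endsMap2_ne (hd : 2 ≤ d) {y : V2} (h : y ≠ v) :
    endsMap2 (V1 := V1) v d hd y = Sum.inr (Sum.inl ⟨y, h⟩) := by simp [endsMap2, h]

private def endsHom2 (hd : 2 ≤ d) : H2 →g glueEnds H1 H2 u v d :=
  ⟨endsMap2 (V1 := V1) v d hd, by
    intro a b hab
    have hne := hab.ne
    rw [glueEnds, SimpleGraph.fromRel_adj]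
    by_cases ha : a = v <;> by_cases hb : b = v
    · exact absurd (ha.trans hb.symm) hne
    · rw [show endsMap2 (V1 := V1) v d hd a = Sum.inr (Sum.inr ⟨d - 2, by omega⟩) from by
        simp [endsMap2, ha], endsMap2_ne v d hd hb]
      exact ⟨by simp, Or.inl ⟨show d - 2 + 1 = d - 1 by omega, ha ▸ hab⟩⟩
    · rw [show endsMap2 (V1 := V1) v d hd b = Sum.inr (Sum.inr ⟨d - 2, by omega⟩) from by
        simp [endsMap2, hb], endsMap2_ne v d hd ha]
      exact ⟨by simp, Or.inr ⟨show d - 2 + 1 = d - 1 by omega, hb ▸ hab.symm⟩⟩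
    · rw [endsMap2_ne v d hd ha, endsMap2_ne v d hd hb]
      exact ⟨by simp [Subtype.ext_iff, hne], Or.inl hab⟩⟩

private lemma ends_adj_pp {i j : Fin (d - 1)} (hij : i.val + 1 = j.val) :
    (glueEnds H1 H2 u v d).Adj (Sum.inr (Sum.inr i)) (Sum.inr (Sum.inr j)) := by
  rw [glueEnds, SimpleGraph.fromRel_adj]
  refine ⟨by simp [Fin.ext_iff]; omega, Or.inl hij⟩

private lemma ends_adj_u0 (h0 : 0 < d - 1) :
    (glueEnds H1 H2 u v d).Adj (Sum.inl u) (Sum.inr (Sum.inr ⟨0, h0⟩)) := by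
  rw [glueEnds, SimpleGraph.fromRel_adj]
  exact ⟨by simp, Or.inl ⟨rfl, rfl⟩⟩

private lemma ends_rle_u_path : ∀ (n : ℕ) (hn : n < d - 1),
    Rle (glueEnds H1 H2 u v d) (Sum.inl u) (Sum.inr (Sum.inr ⟨n, hn⟩)) (n + 1) := by
  intro n
  induction n with
  | zero => exact fun hn => Rle.of_adj (ends_adj_u0 H1 H2 u v d hn)
  | succ m ih =>
    intro hn
    exact (ih (by omega)).trans_adj (ends_adj_pp H1 H2 u v d (by simp))

private noncomputable def phiX (z : V1) : (V1 ⊕ ({x : V2 // x ≠ v} ⊕ Fin (d - 1))) → ℕ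
  | Sum.inl x => H1.dist x z
  | Sum.inr (Sum.inl y) => H2.dist v y.1 + (d - 1) + H1.dist u z
  | Sum.inr (Sum.inr i) => i.val + 1 + H1.dist u z

private lemma phiX_lip (hH1 : H1.Connected) (hH2 : H2.Connected) (z : V1) :
    ∀ a b, (glueEnds H1 H2 u v d).Adj a b →
      phiX H1 H2 u v d z a ≤ phiX H1 H2 u v d z b + 1 := by
  intro a b hab
  rw [glueEnds, SimpleGraph.fromRel_adj] at hab
  obtain ⟨hne, hr⟩ := hab
  rcases a with x | y | i <;> rcases b with x' | y' | i' <;> simp only [phiX]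
  · have t : H1.dist x z ≤ H1.dist x x' + H1.dist x' z := hH1.dist_triangle
    have h1 : H1.dist x x' ≤ 1 := by
      rcases hr with h | h
      exacts [adj_dist_le_one h, adj_dist_le_one h.symm]
    omega
  · rcases hr with h | h <;> exact h.elim
  · rcases hr with ⟨hx, hi⟩ | h
    · rw [hx]; omega
    · exact h.elim
  · rcases hr with h | h <;> exact h.elim
  · have t : H2.dist v y.1 ≤ H2.dist v y'.1 + H2.dist y'.1 y.1 := hH2.dist_triangle
    have h1 : H2.dist y'.1 y.1 ≤ 1 := by
      rcases hr with h | h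
      exacts [adj_dist_le_one h.symm, adj_dist_le_one h]
    omega
  · rcases hr with h | ⟨hi, hadj⟩
    · exact h.elim
    · have h1 : H2.dist v y.1 ≤ 1 := adj_dist_le_one hadj
      omega
  · rcases hr with h | ⟨hx, hi⟩
    · exact h.elim
    · rw [hx]; omega
  · rcases hr with ⟨hi, hadj⟩ | h
    · omega
    · exact h.elim
  · rcases hr with h | h <;> omega

private noncomputable def phiY (z : V2) : (V1 ⊕ ({x : V2 // x ≠ v} ⊕ Fin (d - 1))) → ℕ
  | Sum.inl x => H1.dist u x + (d - 1) + H2.dist v z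
  | Sum.inr (Sum.inl y) => H2.dist y.1 z
  | Sum.inr (Sum.inr i) => (d - 2 - i.val) + H2.dist v z

private lemma phiY_lip (hH1 : H1.Connected) (hH2 : H2.Connected) (z : V2) :
    ∀ a b, (glueEnds H1 H2 u v d).Adj a b →
      phiY H1 H2 u v d z a ≤ phiY H1 H2 u v d z b + 1 := by
  intro a b hab
  rw [glueEnds, SimpleGraph.fromRel_adj] at hab
  obtain ⟨hne, hr⟩ := hab
  rcases a with x | y | i <;> rcases b with x' | y' | i' <;> simp only [phiY]
  · have t : H1.dist u x ≤ H1.dist u x' + H1.dist x' x := hH1.dist_triangle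
    have h1 : H1.dist x' x ≤ 1 := by
      rcases hr with h | h
      exacts [adj_dist_le_one h.symm, adj_dist_le_one h]
    omega
  · rcases hr with h | h <;> exact h.elim
  · rcases hr with ⟨hx, hi⟩ | h
    · rw [hx]
      have h0 : H1.dist u u = 0 := SimpleGraph.dist_self
      omega
    · exact h.elim
  · rcases hr with h | h <;> exact h.elim
  · have t : H2.dist y.1 z ≤ H2.dist y.1 y'.1 + H2.dist y'.1 z := hH2.dist_triangle
    have h1 : H2.dist y.1 y'.1 ≤ 1 := by
      rcases hr with h | h
      exacts [adj_dist_le_one h, adj_dist_le_one h.symm]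
    omega
  · rcases hr with h | ⟨hi, hadj⟩
    · exact h.elim
    · have t : H2.dist y.1 z ≤ H2.dist y.1 v + H2.dist v z := hH2.dist_triangle
      have h1 : H2.dist y.1 v ≤ 1 := adj_dist_le_one hadj.symm
      omega
  · rcases hr with h | ⟨hx, hi⟩
    · exact h.elim
    · rw [hx]
      have h0 : H1.dist u u = 0 := SimpleGraph.dist_self
      omega
  · rcases hr with ⟨hi, hadj⟩ | h
    · have t : H2.dist v z ≤ H2.dist v y'.1 + H2.dist y'.1 z := hH2.dist_triangle
      have h1 : H2.dist v y'.1 ≤ 1 := adj_dist_le_one hadj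
      have hlt := i.isLt
      omega
    · exact h.elim
  · have hlt := i.isLt
    have hlt' := i'.isLt
    rcases hr with h | h <;> omega

end EndsLayer

section Arith

private lemma sum_refl {D : ℕ} (f : Fin D → ℕ) : ∑ i, f i = ∑ i, f (Fin.rev i) :=
  Fintype.sum_equiv (Fin.revPerm) f (fun i => f (Fin.rev i)) (fun i => by simp)

private lemma window_card (D e2 : ℕ) :
    (Finset.univ.filter (fun i : Fin D =>
      2 * D < 4 * i.val + 2 * e2 + 4 ∧ 4 * i.val < 2 * D + 2 * e2)).card ≤ e2 + 2 := by
  classical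
  have hsub : (Finset.univ.filter (fun i : Fin D =>
      2 * D < 4 * i.val + 2 * e2 + 4 ∧ 4 * i.val < 2 * D + 2 * e2)).card ≤
      (Finset.Ico ((2 * D + 2 * e2 + 3) / 4 - (e2 + 2)) ((2 * D + 2 * e2 + 3) / 4)).card := by
    apply Finset.card_le_card_of_injOn (fun i => i.val)
    · intro i hi
      simp only [Finset.coe_filter, Finset.mem_coe, Finset.mem_filter, Finset.mem_univ, true_and, Set.mem_setOf_eq] at hi
      simp only [Finset.mem_coe, Finset.coe_Ico, Set.mem_Ico, Finset.mem_Ico]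
      omega
    · intro i _ j _ hij
      exact Fin.ext hij
  rw [Nat.card_Ico] at hsub
  omega

private lemma pair_fold {D : ℕ} (S : ℕ) (f : Fin D → ℕ) (hS : S = ∑ i, f i) :
    S + S = ∑ i : Fin D, (f i + f (Fin.rev i)) := by
  have h2 : S = ∑ i, f (Fin.rev i) := by rw [hS]; exact sum_refl f
  rw [Finset.sum_add_distrib, ← hS, ← h2]

private lemma keyArith {α β : Type*} [Fintype α] [Fintype β]
    (D e1 e2 : ℕ) (hD : 1 ≤ D) (he1 : 1 ≤ e1) (he2 : 1 ≤ e2)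
    (hcard : 2 ≤ Fintype.card α) (hcard2 : e2 ≤ Fintype.card β)
    (ε1 δ1 : α → ℕ) (ε2 δ2 : β → ℕ)
    (hε1 : ∀ x, ε1 x ≤ δ1 x + e1) (hε2 : ∀ y, ε2 y ≤ δ2 y + e2) :
    (∑ x, max (ε1 x) (δ1 x + max e2 D)) +
      ((∑ y, max (ε2 y) (δ2 y + max e1 D)) +
        (∑ i : Fin D, max (i.val + 1 + max e1 e2) (D - 1 - i.val)))
    < (∑ x, max (ε1 x) (δ1 x + D + e2)) +
      ((∑ y, max (ε2 y) (δ2 y + D + e1)) +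
        (∑ i : Fin D, max (i.val + 1 + e1) (D - 1 - i.val + e2))) := by
  classical
  haveI hne : Nonempty β := Fintype.card_pos_iff.mp (by omega)
  set fa := fun i : Fin D => max (i.val + 1 + max e1 e2) (D - 1 - i.val) with hfa
  set fb := fun i : Fin D => max (i.val + 1 + e1) (D - 1 - i.val + e2) with hfb
  set SU1 := ∑ x, max (ε1 x) (δ1 x + max e2 D) with hSU1
  set SL1 := ∑ x, max (ε1 x) (δ1 x + D + e2) with hSL1
  set SU2 := ∑ y, max (ε2 y) (δ2 y + max e1 D) with hSU2
  set SL2 := ∑ y, max (ε2 y) (δ2 y + D + e1) with hSL2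
  set Sa := ∑ i : Fin D, fa i with hSa
  set Sb := ∑ i : Fin D, fb i with hSb
  have hrev : ∀ i : Fin D, (Fin.rev i : ℕ) = D - 1 - i.val := fun i => by
    have := i.isLt; simp [Fin.rev]; omega
  have hfab : ∀ i : Fin D, fa i = max (i.val + 1 + max e1 e2) (D - 1 - i.val) := fun i => rfl
  have hfbb : ∀ i : Fin D, fb i = max (i.val + 1 + e1) (D - 1 - i.val + e2) := fun i => rfl
  have hfolda := pair_fold Sa fa hSa
  have hfoldb := pair_fold Sb fb hSb
  rcases le_or_gt e2 e1 with hcase | hcase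
  · -- e2 ≤ e1 : pointwise, strict on β
    have hA : SU1 ≤ SL1 := Finset.sum_le_sum (fun x _ => by have := hε1 x; omega)
    have hC : Sa ≤ Sb := Finset.sum_le_sum (fun i _ => by
      rw [hfab i, hfbb i]; omega)
    have hB : SU2 < SL2 := by
      apply Finset.sum_lt_sum (fun y _ => by have := hε2 y; omega)
      obtain ⟨y0⟩ := hne
      exact ⟨y0, Finset.mem_univ _, by have := hε2 y0; omega⟩
    omega
  · -- e1 < e2
    rcases le_or_gt D e2 with hDe | hDe
    · -- D ≤ e2
      have hA : SU1 + Fintype.card α * D ≤ SL1 := by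
        have h : ∑ x, (max (ε1 x) (δ1 x + max e2 D) + D) ≤ SL1 :=
          Finset.sum_le_sum (fun x _ => by have := hε1 x; omega)
        rw [Finset.sum_add_distrib, Finset.sum_const, Finset.card_univ, smul_eq_mul, ← hSU1] at h
        omega
      have hB : SU2 ≤ SL2 := Finset.sum_le_sum (fun y _ => by have := hε2 y; omega)
      have hC : Sa + Sa ≤ Sb + Sb + 2 * D := by
        rw [hfolda, hfoldb]
        have key : ∀ i : Fin D, fa i + fa (Fin.rev i) ≤ (fb i + fb (Fin.rev i)) + 2 := by
          intro i
          rw [hfab i, hfbb i, hfab (Fin.rev i), hfbb (Fin.rev i), hrev i]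
          have hi := i.isLt
          omega
        calc ∑ i : Fin D, (fa i + fa (Fin.rev i))
            ≤ ∑ i : Fin D, ((fb i + fb (Fin.rev i)) + 2) :=
              Finset.sum_le_sum (fun i _ => key i)
          _ = (∑ i : Fin D, (fb i + fb (Fin.rev i))) + ∑ _i : Fin D, 2 :=
              Finset.sum_add_distrib
          _ = (∑ i : Fin D, (fb i + fb (Fin.rev i))) + 2 * D := by
              rw [Finset.sum_const, Finset.card_univ, smul_eq_mul, Fintype.card_fin]
              ring_nf
      have hm : 2 * D ≤ Fintype.card α * D := Nat.mul_le_mul_right D hcard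
      omega
    · -- e2 < D
      have hA : SU1 + Fintype.card α * e2 ≤ SL1 := by
        have h : ∑ x, (max (ε1 x) (δ1 x + max e2 D) + e2) ≤ SL1 :=
          Finset.sum_le_sum (fun x _ => by have := hε1 x; omega)
        rw [Finset.sum_add_distrib, Finset.sum_const, Finset.card_univ, smul_eq_mul, ← hSU1] at h
        omega
      have hB : SU2 + Fintype.card β * e1 ≤ SL2 := by
        have h : ∑ y, (max (ε2 y) (δ2 y + max e1 D) + e1) ≤ SL2 :=
          Finset.sum_le_sum (fun y _ => by have := hε2 y; omega)
        rw [Finset.sum_add_distrib, Finset.sum_const, Finset.card_univ, smul_eq_mul, ← hSU2] at h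
        omega
      have hC : Sa + Sa ≤ Sb + Sb + 2 * (e2 + 2) := by
        rw [hfolda, hfoldb]
        have key : ∀ i : Fin D, fa i + fa (Fin.rev i) ≤ (fb i + fb (Fin.rev i)) +
            (if 2 * D < 4 * i.val + 2 * e2 + 4 ∧ 4 * i.val < 2 * D + 2 * e2
              then 2 else 0) := by
          intro i
          rw [hfab i, hfbb i, hfab (Fin.rev i), hfbb (Fin.rev i), hrev i]
          have hi := i.isLt
          split_ifs with hw <;> omega
        have hw2 : ∑ i : Fin D, (if 2 * D < 4 * i.val + 2 * e2 + 4 ∧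
            4 * i.val < 2 * D + 2 * e2 then (2:ℕ) else 0) ≤ 2 * (e2 + 2) := by
          rw [← Finset.sum_filter, Finset.sum_const, smul_eq_mul]
          calc _ ≤ (e2 + 2) * 2 := Nat.mul_le_mul_right 2 (window_card D e2)
            _ = 2 * (e2 + 2) := by ring
        calc ∑ i : Fin D, (fa i + fa (Fin.rev i))
            ≤ ∑ i : Fin D, ((fb i + fb (Fin.rev i)) +
              (if 2 * D < 4 * i.val + 2 * e2 + 4 ∧ 4 * i.val < 2 * D + 2 * e2
                then 2 else 0)) := Finset.sum_le_sum (fun i _ => key i)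
          _ = (∑ i : Fin D, (fb i + fb (Fin.rev i))) +
              ∑ i : Fin D, (if 2 * D < 4 * i.val + 2 * e2 + 4 ∧
                4 * i.val < 2 * D + 2 * e2 then (2:ℕ) else 0) := Finset.sum_add_distrib
          _ ≤ (∑ i : Fin D, (fb i + fb (Fin.rev i))) + 2 * (e2 + 2) := by omega
      have hm1 : 2 * e2 ≤ Fintype.card α * e2 := Nat.mul_le_mul_right e2 hcard
      have hm2 : e2 * e1 ≤ Fintype.card β * e1 := Nat.mul_le_mul_right e1 hcard2
      have hm3 : e2 * 1 ≤ e2 * e1 := Nat.mul_le_mul_left e2 he1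
      omega

end Arith


-- STATEMENT 2
theorem stmt2 {V1 V2 : Type*} [Fintype V1] [Fintype V2] [DecidableEq V2]
    (H1 : SimpleGraph V1) (H2 : SimpleGraph V2)
    (hH1 : H1.Connected) (hH2 : H2.Connected)
    (hV1 : 2 ≤ Fintype.card V1) (hV2 : 2 ≤ Fintype.card V2)
    (u : V1) (v : V2) (d : ℕ) (hd : 2 ≤ d) :
    totalEcc (glueMid H1 H2 u v d) < totalEcc (glueEnds H1 H2 u v d) := by
  classical
  haveI hne1 : Nonempty V1 := Fintype.card_pos_iff.mp (by omega)
  haveI hne2 : Nonempty V2 := Fintype.card_pos_iff.mp (by omega)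
  obtain ⟨w1, hw1⟩ := Fintype.exists_ne_of_one_lt_card (by omega : 1 < Fintype.card V1) u
  obtain ⟨w2, hw2⟩ := Fintype.exists_ne_of_one_lt_card (by omega : 1 < Fintype.card V2) v
  haveI hneY : Nonempty {x : V2 // x ≠ v} := ⟨⟨w2, hw2⟩⟩
  set e1 := ecc H1 u with he1def
  set e2 := ecc H2 v with he2def
  have he1sup : e1 = ⨆ x, H1.dist u x := he1def
  have he2sup : e2 = ⨆ y, H2.dist v y := he2def
  have hδ1e : ∀ x, H1.dist u x ≤ e1 := fun x => he1sup ▸ le_iSup_nat (fun x => H1.dist u x) x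
  have hδ2e : ∀ y, H2.dist v y ≤ e2 := fun y => he2sup ▸ le_iSup_nat (fun y => H2.dist v y) y
  have he1 : 1 ≤ e1 :=
    le_trans ((hH1 u w1).pos_dist_of_ne (Ne.symm hw1)) (hδ1e w1)
  have he2 : 1 ≤ e2 :=
    le_trans ((hH2 v w2).pos_dist_of_ne (Ne.symm hw2)) (hδ2e w2)
  obtain ⟨xstar, hxstar⟩ := exists_iSup_eq (fun x => H1.dist u x)
  rw [← he1sup] at hxstar
  obtain ⟨ystar, hystar⟩ := exists_iSup_eq (fun y => H2.dist v y)
  rw [← he2sup] at hystar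
  have hystar_ne : ystar ≠ v := by
    intro h
    rw [h, SimpleGraph.dist_self] at hystar
    omega
  have hcard2' : e2 ≤ Fintype.card {x : V2 // x ≠ v} := by
    have h1 : e2 < Fintype.card V2 := by
      rw [hystar]; exact dist_lt_card (hH2 v ystar)
    have h2 : Fintype.card {x : V2 // x ≠ v} = Fintype.card V2 - 1 := by
      simp [Fintype.card_subtype_compl]
    omega
  -- eccentricity functions for the parts
  have hε1b : ∀ x, ecc H1 x ≤ H1.dist u x + e1 := by
    intro x
    apply ciSup_le
    intro z
    calc H1.dist x z ≤ H1.dist x u + H1.dist u z := hH1.dist_triangle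
      _ ≤ H1.dist u x + e1 := by
          rw [SimpleGraph.dist_comm]
          exact Nat.add_le_add_left (hδ1e z) _
  have hε2b : ∀ Y : {x : V2 // x ≠ v},
      (⨆ Z : {x : V2 // x ≠ v}, H2.dist Y.1 Z.1) ≤ H2.dist v Y.1 + e2 := by
    intro Y
    apply ciSup_le
    intro Z
    calc H2.dist Y.1 Z.1 ≤ H2.dist Y.1 v + H2.dist v Z.1 := hH2.dist_triangle
      _ ≤ H2.dist v Y.1 + e2 := by
          rw [SimpleGraph.dist_comm]
          exact Nat.add_le_add_left (hδ2e Z.1) _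
  ---------------------------------------------------------------------------
  -- Upper bounds for (glueMid H1 H2 u v d) = glueMid
  ---------------------------------------------------------------------------
  have rle1 : ∀ x x' : V1, Rle (glueMid H1 H2 u v d) (Sum.inl x) (Sum.inl x') (H1.dist x x') :=
    fun x x' => rle_map (midHom1 H1 H2 u v d) hH1 x x'
  have rle2 : ∀ y y' : V2, Rle (glueMid H1 H2 u v d) (midMap2 u v d y) (midMap2 u v d y') (H2.dist y y') :=
    fun y y' => rle_map (midHom2 H1 H2 u v d) hH2 y y'
  have rleUY : ∀ Y : {x : V2 // x ≠ v},
      Rle (glueMid H1 H2 u v d) (Sum.inl u) (Sum.inr (Sum.inl Y)) (H2.dist v Y.1) := by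
    intro Y
    have h := rle2 v Y.1
    rw [midMap2_v u v d, midMap2_ne u v d Y.2] at h
    exact h
  have rleYY : ∀ Y Z : {x : V2 // x ≠ v},
      Rle (glueMid H1 H2 u v d) (Sum.inr (Sum.inl Y)) (Sum.inr (Sum.inl Z)) (H2.dist Y.1 Z.1) := by
    intro Y Z
    have h := rle2 Y.1 Z.1
    rw [midMap2_ne u v d Y.2, midMap2_ne u v d Z.2] at h
    exact h
  have rleU : ∀ i : Fin (d - 1), Rle (glueMid H1 H2 u v d) (Sum.inl u) (Sum.inr (Sum.inr i)) (i.val + 1) := by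
    intro i
    have h := mid_rle_u_path H1 H2 u v d i.val i.isLt
    simpa using h
  have hU1 : ∀ x : V1, ecc (glueMid H1 H2 u v d) (Sum.inl x) ≤
      max (ecc H1 x) (H1.dist u x + max e2 (d - 1)) := by
    intro x
    rw [ecc]
    apply ciSup_le
    intro t
    rcases t with x' | Y | i
    · have h1 := (rle1 x x').dist_le
      have h2 : H1.dist x x' ≤ ecc H1 x := le_iSup_nat (fun z => H1.dist x z) x'
      omega
    · have h1 := ((rle1 x u).trans (rleUY Y)).dist_le
      have h2 : H1.dist x u = H1.dist u x := SimpleGraph.dist_comm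
      have h3 := hδ2e Y.1
      omega
    · have h1 := ((rle1 x u).trans (rleU i)).dist_le
      have h2 : H1.dist x u = H1.dist u x := SimpleGraph.dist_comm
      have h3 := i.isLt
      omega
  have hU2 : ∀ Y : {x : V2 // x ≠ v}, ecc (glueMid H1 H2 u v d) (Sum.inr (Sum.inl Y)) ≤
      max (⨆ Z : {x : V2 // x ≠ v}, H2.dist Y.1 Z.1)
        (H2.dist v Y.1 + max e1 (d - 1)) := by
    intro Y
    rw [ecc]
    apply ciSup_le
    intro t
    rcases t with x' | Z | i
    · have h1 := ((rleUY Y).symm.trans (rle1 u x')).dist_le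
      have h2 : H2.dist v Y.1 = H2.dist v Y.1 := rfl
      have h3 := hδ1e x'
      omega
    · have h1 := (rleYY Y Z).dist_le
      have h2 : H2.dist Y.1 Z.1 ≤ ⨆ Z : {x : V2 // x ≠ v}, H2.dist Y.1 Z.1 :=
        le_iSup_nat (fun Z : {x : V2 // x ≠ v} => H2.dist Y.1 Z.1) Z
      omega
    · have h1 := ((rleUY Y).symm.trans (rleU i)).dist_le
      have h3 := i.isLt
      omega
  have hU3 : ∀ i : Fin (d - 1), ecc (glueMid H1 H2 u v d) (Sum.inr (Sum.inr i)) ≤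
      max (i.val + 1 + max e1 e2) (d - 1 - 1 - i.val) := by
    intro i
    rw [ecc]
    apply ciSup_le
    intro t
    rcases t with x' | Y | j
    · have h1 := ((rleU i).symm.trans (rle1 u x')).dist_le
      have h3 := hδ1e x'
      omega
    · have h1 := ((rleU i).symm.trans (rleUY Y)).dist_le
      have h3 := hδ2e Y.1
      omega
    · rcases le_total i.val j.val with hij | hij
      · have h1 := (mid_rle_pp H1 H2 u v d (j.val - i.val) i j (by omega)).dist_le
        have h3 := j.isLt
        omega
      · have h1 := (mid_rle_pp H1 H2 u v d (i.val - j.val) j i (by omega)).symm.dist_le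
        have h3 := i.isLt
        omega
  ---------------------------------------------------------------------------
  -- Lower bounds for (glueEnds H1 H2 u v d) = glueEnds
  ---------------------------------------------------------------------------
  have reach : ∀ w : V1 ⊕ ({x : V2 // x ≠ v} ⊕ Fin (d - 1)), (glueEnds H1 H2 u v d).Reachable (Sum.inl u) w := by
    intro w
    rcases w with x | Y | i
    · exact SimpleGraph.Reachable.map (endsHom1 H1 H2 u v d) (hH1 u x)
    · have h1 := (ends_rle_u_path H1 H2 u v d (d - 2) (by omega)).reachable
      have h2 := SimpleGraph.Reachable.map (endsHom2 H1 H2 u v d hd) (hH2 v Y.1)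
      have hmv : (endsHom2 H1 H2 u v d hd) v =
          Sum.inr (Sum.inr (⟨d - 2, by omega⟩ : Fin (d - 1))) := endsMap2_v v d hd
      have hmy : (endsHom2 H1 H2 u v d hd) Y.1 = Sum.inr (Sum.inl ⟨Y.1, Y.2⟩) :=
        endsMap2_ne v d hd Y.2
      rw [hmv, hmy] at h2
      have : (⟨Y.1, Y.2⟩ : {x : V2 // x ≠ v}) = Y := Subtype.ext rfl
      rw [this] at h2
      exact h1.trans h2
    · have h := (ends_rle_u_path H1 H2 u v d i.val i.isLt).reachable
      simpa using h
  have hreach : ∀ s t : V1 ⊕ ({x : V2 // x ≠ v} ⊕ Fin (d - 1)), (glueEnds H1 H2 u v d).Reachable s t :=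
    fun s t => (reach s).symm.trans (reach t)
  have hL1 : ∀ x : V1,
      max (ecc H1 x) (H1.dist u x + (d - 1) + e2) ≤ ecc (glueEnds H1 H2 u v d) (Sum.inl x) := by
    intro x
    apply max_le
    · obtain ⟨z, hz⟩ := exists_iSup_eq (fun z => H1.dist x z)
      have hlow := dist_lower (phiX H1 H2 u v d z) (phiX_lip H1 H2 u v d hH1 hH2 z)
        (hreach (Sum.inl x) (Sum.inl z))
      simp only [phiX, SimpleGraph.dist_self] at hlow
      have hecc : ecc H1 x = H1.dist x z := hz
      have hd2 : (glueEnds H1 H2 u v d).dist (Sum.inl x) (Sum.inl z) ≤ ecc (glueEnds H1 H2 u v d) (Sum.inl x) :=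
        le_iSup_nat (fun t => (glueEnds H1 H2 u v d).dist (Sum.inl x) t) (Sum.inl z)
      omega
    · have hlow := dist_lower (phiY H1 H2 u v d ystar) (phiY_lip H1 H2 u v d hH1 hH2 ystar)
        (hreach (Sum.inl x) (Sum.inr (Sum.inl ⟨ystar, hystar_ne⟩)))
      simp only [phiY, SimpleGraph.dist_self] at hlow
      have hd2 : (glueEnds H1 H2 u v d).dist (Sum.inl x) (Sum.inr (Sum.inl ⟨ystar, hystar_ne⟩)) ≤
          ecc (glueEnds H1 H2 u v d) (Sum.inl x) :=
        le_iSup_nat (fun t => (glueEnds H1 H2 u v d).dist (Sum.inl x) t) _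
      omega
  have hL2 : ∀ Y : {x : V2 // x ≠ v},
      max (⨆ Z : {x : V2 // x ≠ v}, H2.dist Y.1 Z.1) (H2.dist v Y.1 + (d - 1) + e1) ≤
        ecc (glueEnds H1 H2 u v d) (Sum.inr (Sum.inl Y)) := by
    intro Y
    apply max_le
    · obtain ⟨Z, hZ⟩ := exists_iSup_eq (fun Z : {x : V2 // x ≠ v} => H2.dist Y.1 Z.1)
      have hlow := dist_lower (phiY H1 H2 u v d Z.1) (phiY_lip H1 H2 u v d hH1 hH2 Z.1)
        (hreach (Sum.inr (Sum.inl Y)) (Sum.inr (Sum.inl Z)))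
      simp only [phiY, SimpleGraph.dist_self] at hlow
      have hd2 : (glueEnds H1 H2 u v d).dist (Sum.inr (Sum.inl Y)) (Sum.inr (Sum.inl Z)) ≤
          ecc (glueEnds H1 H2 u v d) (Sum.inr (Sum.inl Y)) :=
        le_iSup_nat (fun t => (glueEnds H1 H2 u v d).dist (Sum.inr (Sum.inl Y)) t) _
      omega
    · have hlow := dist_lower (phiX H1 H2 u v d xstar) (phiX_lip H1 H2 u v d hH1 hH2 xstar)
        (hreach (Sum.inr (Sum.inl Y)) (Sum.inl xstar))
      simp only [phiX, SimpleGraph.dist_self] at hlow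
      have hd2 : (glueEnds H1 H2 u v d).dist (Sum.inr (Sum.inl Y)) (Sum.inl xstar) ≤
          ecc (glueEnds H1 H2 u v d) (Sum.inr (Sum.inl Y)) :=
        le_iSup_nat (fun t => (glueEnds H1 H2 u v d).dist (Sum.inr (Sum.inl Y)) t) _
      omega
  have hL3 : ∀ i : Fin (d - 1),
      max (i.val + 1 + e1) (d - 1 - 1 - i.val + e2) ≤ ecc (glueEnds H1 H2 u v d) (Sum.inr (Sum.inr i)) := by
    intro i
    apply max_le
    · have hlow := dist_lower (phiX H1 H2 u v d xstar) (phiX_lip H1 H2 u v d hH1 hH2 xstar)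
        (hreach (Sum.inr (Sum.inr i)) (Sum.inl xstar))
      simp only [phiX, SimpleGraph.dist_self] at hlow
      have hd2 : (glueEnds H1 H2 u v d).dist (Sum.inr (Sum.inr i)) (Sum.inl xstar) ≤
          ecc (glueEnds H1 H2 u v d) (Sum.inr (Sum.inr i)) :=
        le_iSup_nat (fun t => (glueEnds H1 H2 u v d).dist (Sum.inr (Sum.inr i)) t) _
      omega
    · have hlow := dist_lower (phiY H1 H2 u v d ystar) (phiY_lip H1 H2 u v d hH1 hH2 ystar)
        (hreach (Sum.inr (Sum.inr i)) (Sum.inr (Sum.inl ⟨ystar, hystar_ne⟩)))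
      simp only [phiY, SimpleGraph.dist_self] at hlow
      have hd2 : (glueEnds H1 H2 u v d).dist (Sum.inr (Sum.inr i)) (Sum.inr (Sum.inl ⟨ystar, hystar_ne⟩)) ≤
          ecc (glueEnds H1 H2 u v d) (Sum.inr (Sum.inr i)) :=
        le_iSup_nat (fun t => (glueEnds H1 H2 u v d).dist (Sum.inr (Sum.inr i)) t) _
      omega
  ---------------------------------------------------------------------------
  -- Assemble
  ---------------------------------------------------------------------------
  have hsplit : ∀ (G : SimpleGraph (V1 ⊕ ({x : V2 // x ≠ v} ⊕ Fin (d - 1)))),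
      totalEcc G = (∑ x, ecc G (Sum.inl x)) +
        ((∑ Y : {x : V2 // x ≠ v}, ecc G (Sum.inr (Sum.inl Y))) +
          (∑ i : Fin (d - 1), ecc G (Sum.inr (Sum.inr i)))) := by
    intro G
    rw [totalEcc, Fintype.sum_sum_type, Fintype.sum_sum_type]
  rw [hsplit (glueMid H1 H2 u v d), hsplit (glueEnds H1 H2 u v d)]
  have kk := keyArith (d - 1) e1 e2 (by omega) he1 he2 hV1 hcard2'
    (fun x => ecc H1 x) (fun x => H1.dist u x)
    (fun Y : {x : V2 // x ≠ v} => ⨆ Z : {x : V2 // x ≠ v}, H2.dist Y.1 Z.1)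
    (fun Y => H2.dist v Y.1) hε1b hε2b
  refine lt_of_le_of_lt ?_ (lt_of_lt_of_le kk ?_)
  · exact add_le_add (Finset.sum_le_sum fun x _ => hU1 x)
      (add_le_add (Finset.sum_le_sum fun Y _ => hU2 Y)
        (Finset.sum_le_sum fun i _ => hU3 i))
  · exact add_le_add (Finset.sum_le_sum fun x _ => hL1 x)
      (add_le_add (Finset.sum_le_sum fun Y _ => hL2 Y)
        (Finset.sum_le_sum fun i _ => hL3 i))
end

section
/- For every n ≥ 7, ε(C_{3,3}^n) > ε(C_n). -/
open SimpleGraph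

lemma walk_lip' {V : Type*} {G : SimpleGraph V} {f : V → ℕ}
    (hf : ∀ a b, G.Adj a b → f a ≤ f b + 1) {u v : V} (p : G.Walk u v) :
    f u ≤ f v + p.length := by
  induction p with
  | nil => simp
  | cons h q ih =>
    simp only [SimpleGraph.Walk.length_cons]
    have := hf _ _ h
    omega

lemma dist_lip' {V : Type*} {G : SimpleGraph V} {f : V → ℕ}
    (hf : ∀ a b, G.Adj a b → f a ≤ f b + 1) {u v : V} (h : G.Reachable u v) :
    f u ≤ f v + G.dist u v := by
  obtain ⟨p, hp⟩ := h.exists_walk_length_eq_dist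
  rw [← hp]; exact walk_lip' hf p

lemma dist_le_ecc' {V : Type*} [Fintype V] (G : SimpleGraph V) (v u : V) :
    G.dist v u ≤ ecc G v :=
  le_ciSup (Set.Finite.bddAbove (Set.finite_range _)) u

lemma ecc_le_of' {V : Type*} [Nonempty V] (G : SimpleGraph V) (v : V) (m : ℕ)
    (h : ∀ u, G.dist v u ≤ m) : ecc G v ≤ m := ciSup_le h

lemma cycle_adj_succ' {n : ℕ} [NeZero n] (hn : 2 ≤ n) (x : Fin n) :
    (cycleGraph n).Adj x (x + 1) := by
  rw [cycleGraph_adj']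
  right
  rw [add_sub_cancel_left, Fin.val_one']
  exact Nat.mod_eq_of_lt (by omega)

open Fin.NatCast in
lemma cycle_dist_add' (n : ℕ) [NeZero n] (hn : 2 ≤ n) (v : Fin n) (k : ℕ) :
    (cycleGraph n).dist v (v + (k : Fin n)) ≤ k := by
  have hconn : (cycleGraph n).Connected := by
    obtain ⟨m, rfl⟩ : ∃ m, n = m + 1 := ⟨n - 1, by omega⟩
    exact cycleGraph_connected
  induction k with
  | zero => simp
  | succ k ih =>
    have hc : ((k + 1 : ℕ) : Fin n) = (k : Fin n) + 1 := by push_cast; ring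
    rw [hc, ← add_assoc]
    calc (cycleGraph n).dist v (v + (k : Fin n) + 1)
        ≤ (cycleGraph n).dist v (v + (k : Fin n))
          + (cycleGraph n).dist (v + (k : Fin n)) (v + (k : Fin n) + 1) :=
          hconn.dist_triangle
      _ ≤ k + 1 := by
          have h1 : (cycleGraph n).dist (v + (k : Fin n)) (v + (k : Fin n) + 1) ≤ 1 := by
            have := SimpleGraph.dist_le (cycle_adj_succ' hn (v + (k : Fin n))).toWalk
            simpa using this
          omega

open Fin.NatCast in
lemma cycle_dist_le' (n : ℕ) [NeZero n] (hn : 2 ≤ n) (v u : Fin n) :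
    (cycleGraph n).dist v u ≤ n / 2 := by
  rcases eq_or_ne u v with rfl | hne
  · simp [SimpleGraph.dist_self]
  have h1 : (cycleGraph n).dist v u ≤ (u - v).val := by
    have := cycle_dist_add' n hn v (u - v).val
    rwa [Fin.cast_val_eq_self, add_sub_cancel] at this
  have h2 : (cycleGraph n).dist v u ≤ (v - u).val := by
    rw [SimpleGraph.dist_comm]
    have := cycle_dist_add' n hn u (v - u).val
    rwa [Fin.cast_val_eq_self, add_sub_cancel] at this
  have e1 : (u - v).val = ((n - v.val) + u.val) % n := by rw [Fin.sub_def]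
  have e2 : (v - u).val = ((n - u.val) + v.val) % n := by rw [Fin.sub_def]
  have hv := v.isLt
  have hu := u.isLt
  have hne' : u.val ≠ v.val := fun h => hne (Fin.ext h)
  have key : ∀ a b : ℕ, a < n → b < n → a < b →
      (n - b + a) % n = n - b + a ∧ (n - a + b) % n = b - a := by
    intro a b ha hb hab
    refine ⟨Nat.mod_eq_of_lt (by omega), ?_⟩
    have h3 : n - a + b = (b - a) + n := by omega
    rw [h3, Nat.add_mod_right]
    exact Nat.mod_eq_of_lt (by omega)
  rcases Nat.lt_trichotomy u.val v.val with h | h | h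
  · obtain ⟨k1, k2⟩ := key u.val v.val hu hv h
    omega
  · omega
  · obtain ⟨k1, k2⟩ := key v.val u.val hv hu h
    omega

lemma c33_lip (n : ℕ) (hn : 7 ≤ n) : ∀ a b : Fin n, (C33 n).Adj a b →
    min (a.val - 1) (n - 3) ≤ min (b.val - 1) (n - 3) + 1 := by
  intro a b hab
  rw [C33, SimpleGraph.fromRel_adj] at hab
  obtain ⟨-, h | h⟩ := hab <;> omega

lemma c33_reach (n : ℕ) (hn : 7 ≤ n) : ∀ k, ∀ v : Fin n, v.val ≤ k →
    (C33 n).Reachable v ⟨0, by omega⟩ := by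
  intro k
  induction k with
  | zero =>
    intro v hv
    have hv0 : v = ⟨0, by omega⟩ := Fin.ext (by simpa using hv)
    rw [hv0]
  | succ k ih =>
    intro v hv
    rcases Nat.lt_or_ge v.val (k + 1) with h | h
    · exact ih v (by omega)
    have hvk : v.val = k + 1 := by omega
    have hvn := v.isLt
    have hpvlt : (if v.val ≤ 2 then 0 else if v.val ≤ n - 3 then v.val - 1 else n - 3) < n := by
      split_ifs <;> omega
    set u : Fin n := ⟨if v.val ≤ 2 then 0 else if v.val ≤ n - 3 then v.val - 1 else n - 3,
      hpvlt⟩ with hu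
    have huv : u.val = if v.val ≤ 2 then 0 else if v.val ≤ n - 3 then v.val - 1 else n - 3 := rfl
    have hult : u.val < v.val := by rw [huv]; split_ifs <;> omega
    have hadj : (C33 n).Adj v u := by
      rw [C33, SimpleGraph.fromRel_adj]
      refine ⟨fun hh => ?_, Or.inr ?_⟩
      · rw [Fin.ext_iff] at hh; omega
      · rw [huv] at hult ⊢
        split_ifs at hult ⊢ <;> omega
    exact hadj.reachable.trans (ih u (by omega))


def gfun (n k : ℕ) : ℕ :=
  if k = 0 ∨ k = 1 ∨ k = n - 2 ∨ k = n - 1 then (n - 3) - (n - 2) / 2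
  else if k = 2 ∨ k = n - 3 then (n - 4) - (n - 2) / 2 else 0

lemma gfun0 (n : ℕ) (hn : 7 ≤ n) : gfun n 0 = (n - 3) - (n - 2) / 2 := by
  rw [gfun, if_pos (Or.inl rfl)]

lemma gfun1 (n : ℕ) (hn : 7 ≤ n) : gfun n 1 = (n - 3) - (n - 2) / 2 := by
  rw [gfun, if_pos (Or.inr (Or.inl rfl))]

lemma gfun2 (n : ℕ) (hn : 7 ≤ n) : gfun n 2 = (n - 4) - (n - 2) / 2 := by
  rw [gfun, if_neg (by omega), if_pos (Or.inl rfl)]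

lemma gfun3 (n : ℕ) (hn : 7 ≤ n) : gfun n (n - 3) = (n - 4) - (n - 2) / 2 := by
  rw [gfun, if_neg (by omega), if_pos (Or.inr rfl)]

lemma gfun4 (n : ℕ) (hn : 7 ≤ n) : gfun n (n - 2) = (n - 3) - (n - 2) / 2 := by
  rw [gfun, if_pos (Or.inr (Or.inr (Or.inl rfl)))]

lemma gfun5 (n : ℕ) (hn : 7 ≤ n) : gfun n (n - 1) = (n - 3) - (n - 2) / 2 := by
  rw [gfun, if_pos (Or.inr (Or.inr (Or.inr rfl)))]

-- STATEMENT 6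
theorem stmt6 (n : ℕ) (hn : 7 ≤ n) :
    totalEcc (cycleGraph n) < totalEcc (C33 n) := by
  haveI : NeZero n := ⟨by omega⟩
  set c : ℕ := (n - 2) / 2 with hc
  -- upper bound for the cycle
  have hcyc : totalEcc (cycleGraph n) ≤ n * (n / 2) := by
    rw [totalEcc]
    calc ∑ v : Fin n, ecc (cycleGraph n) v
        ≤ ∑ _v : Fin n, (n / 2) :=
          Finset.sum_le_sum fun v _ => ecc_le_of' _ v _ (fun u => cycle_dist_le' n (by omega) v u)
      _ = n * (n / 2) := by
          rw [Finset.sum_const, Finset.card_univ, Fintype.card_fin, smul_eq_mul]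
  -- lower bounds for C33
  have z0lt : (0 : ℕ) < n := by omega
  have zllt : n - 1 < n := by omega
  set z0 : Fin n := ⟨0, z0lt⟩ with hz0
  set zl : Fin n := ⟨n - 1, zllt⟩ with hzl
  have hz0v : z0.val = 0 := rfl
  have hzlv : zl.val = n - 1 := rfl
  have hreach : ∀ v : Fin n, (C33 n).Reachable v z0 :=
    fun v => c33_reach n hn n v (le_of_lt v.isLt)
  have hlip : ∀ a b : Fin n, (C33 n).Adj a b →
      min (a.val - 1) (n - 3) ≤ min (b.val - 1) (n - 3) + 1 := c33_lip n hn
  have key : ∀ v : Fin n, min (v.val - 1) (n - 3) ≤ ecc (C33 n) v ∧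
      (n - 3) - min (v.val - 1) (n - 3) ≤ ecc (C33 n) v := by
    intro v
    constructor
    · have h1 := dist_lip' (f := fun v : Fin n => min (v.val - 1) (n - 3)) hlip (hreach v)
      have h2 := dist_le_ecc' (C33 n) v z0
      omega
    · have hrv : (C33 n).Reachable zl v := (hreach zl).trans (hreach v).symm
      have h1 := dist_lip' (f := fun v : Fin n => min (v.val - 1) (n - 3)) hlip hrv
      have h2 := dist_le_ecc' (C33 n) v zl
      have h3 : (C33 n).dist zl v = (C33 n).dist v zl := SimpleGraph.dist_comm
      omega
  -- per-vertex lower bound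
  have hpt : ∀ v : Fin n, c + gfun n v.val ≤ ecc (C33 n) v := by
    intro v
    obtain ⟨A, B⟩ := key v
    have hv := v.isLt
    rw [gfun]
    split_ifs <;> omega
  have hlow : n * c + ∑ k ∈ Finset.range n, gfun n k ≤ totalEcc (C33 n) := by
    rw [totalEcc, ← Fin.sum_univ_eq_sum_range]
    calc n * c + ∑ v : Fin n, gfun n v.val = ∑ v : Fin n, (c + gfun n v.val) := by
          rw [Finset.sum_add_distrib, Finset.sum_const, Finset.card_univ, Fintype.card_fin,
            smul_eq_mul]
      _ ≤ ∑ v : Fin n, ecc (C33 n) v := Finset.sum_le_sum fun v _ => hpt v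
  -- the six special vertices
  have hT : 4 * ((n - 3) - c) + 2 * ((n - 4) - c) ≤ ∑ k ∈ Finset.range n, gfun n k := by
    have hsub : ({0, 1, 2, n - 3, n - 2, n - 1} : Finset ℕ) ⊆ Finset.range n := by
      intro x hx
      simp only [Finset.mem_insert, Finset.mem_singleton] at hx
      rw [Finset.mem_range]
      omega
    have hmono : ∑ k ∈ ({0, 1, 2, n - 3, n - 2, n - 1} : Finset ℕ), gfun n k
        ≤ ∑ k ∈ Finset.range n, gfun n k :=
      Finset.sum_le_sum_of_subset hsub
    have hval : ∑ k ∈ ({0, 1, 2, n - 3, n - 2, n - 1} : Finset ℕ), gfun n k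
        = 4 * ((n - 3) - c) + 2 * ((n - 4) - c) := by
      rw [Finset.sum_insert (by simp; omega), Finset.sum_insert (by simp; omega),
        Finset.sum_insert (by simp; omega), Finset.sum_insert (by simp; omega),
        Finset.sum_insert (by simp; omega), Finset.sum_singleton]
      rw [gfun0 n hn, gfun1 n hn, gfun2 n hn, gfun3 n hn, gfun4 n hn, gfun5 n hn, hc]
      ring
    omega
  -- final arithmetic
  have harith : n * (n / 2) < n * c + (4 * ((n - 3) - c) + 2 * ((n - 4) - c)) := by
    rcases Nat.even_or_odd n with he | ho
    · obtain ⟨a, rfl⟩ : ∃ a, n = 2 * a + 8 := ⟨(n - 8) / 2, by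
        obtain ⟨m, hm⟩ := he; omega⟩
      have d1 : (2 * a + 8) / 2 = a + 4 := by omega
      have d2 : c = a + 3 := by rw [hc]; omega
      have d3 : (2 * a + 8 - 3) - c = a + 2 := by omega
      have d4 : (2 * a + 8 - 4) - c = a + 1 := by omega
      rw [d1, d3, d4, d2]
      nlinarith
    · obtain ⟨a, rfl⟩ : ∃ a, n = 2 * a + 7 := ⟨(n - 7) / 2, by
        obtain ⟨m, hm⟩ := ho; omega⟩
      have d1 : (2 * a + 7) / 2 = a + 3 := by omega
      have d2 : c = a + 2 := by rw [hc]; omega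
      have d3 : (2 * a + 7 - 3) - c = a + 2 := by omega
      have d4 : (2 * a + 7 - 4) - c = a + 1 := by omega
      rw [d1, d3, d4, d2]
      nlinarith
  omega
end
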